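/- arXiv:1109.3683 — 7 statements merged into one kernel-verified Lean document; each statement's English description precedes it below -/
import Mathlib

section
/- Let T be a compact operator on a Hilbert space H with trivial kernel, ker T = {0}. Then the system of root vectors of T (the union over all nonzero eigenvalues λ of the root subspaces ⋃_k ker(T - λ)^k) is a minimal system in H, i.e., no vector in the system lies in the closed linear span of the others. -/
open Filter Topology

set_option linter.unusedSectionVars false
set_option linter.unusedVariables false
set_option maxHeartbeats 1000000

section Aux

variable {H : Type*} [NormedAddCommGroup H] [InnerProductSpace ℂ H] [CompleteSpace H]

/-- From a compact operator and a bounded sequence, extract a subsequence whose image converges. -/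
lemma aux_compact_subseq (S : H →L[ℂ] H) (hS : IsCompactOperator (⇑S)) (u : ℕ → H) (C : ℝ)
    (hu : ∀ n, ‖u n‖ ≤ C) :
    ∃ (z : H) (φ : ℕ → ℕ), StrictMono φ ∧ Tendsto (fun l => S (u (φ l))) atTop (𝓝 z) := by
  obtain ⟨K, hK, hKmem⟩ := hS
  obtain ⟨ε, hε, hball⟩ := Metric.mem_nhds_iff.1 hKmem
  have hC0 : (0:ℝ) ≤ C := le_trans (norm_nonneg _) (hu 0)
  set c : ℝ := ε / (2 * (C + 1)) with hc
  have hcpos : 0 < c := div_pos hε (by linarith)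
  have hkey : c * (C + 1) = ε / 2 := by rw [hc]; field_simp
  have hmem : ∀ n, S ((c : ℂ) • u n) ∈ K := by
    intro n
    apply hball
    simp only [Metric.mem_ball, dist_zero_right, norm_smul]
    have h1 : ‖(c:ℂ)‖ = c := by
      rw [Complex.norm_real, Real.norm_eq_abs, abs_of_pos hcpos]
    rw [h1]
    calc c * ‖u n‖ ≤ c * C := mul_le_mul_of_nonneg_left (hu n) hcpos.le
      _ < c * (C + 1) := by nlinarith
      _ = ε / 2 := hkey
      _ < ε := by linarith
  obtain ⟨a, -, φ, hφ, ha⟩ := hK.isSeqCompact hmem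
  refine ⟨(c:ℂ)⁻¹ • a, φ, hφ, ?_⟩
  have h2 : ∀ n, S (u n) = (c:ℂ)⁻¹ • S ((c:ℂ) • u n) := by
    intro n
    rw [map_smul, smul_smul, inv_mul_cancel₀ (by exact_mod_cast hcpos.ne'), one_smul]
  simp only [h2]
  exact ha.const_smul _

/-- distance to a finite-dimensional subspace is minimized. -/
lemma aux_min_dist (K : Submodule ℂ H) [FiniteDimensional ℂ K] (x : H) :
    ∃ k ∈ K, ∀ k' ∈ K, ‖x - k‖ ≤ ‖x - k'‖ := by
  haveI : CompleteSpace K := FiniteDimensional.complete ℂ K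
  refine ⟨K.orthogonalProjectionOnto x, Submodule.coe_mem _, fun k' hk' => ?_⟩
  rw [← Submodule.starProjection_apply, Submodule.starProjection_minimal]
  exact ciInf_le ⟨0, fun r ⟨y, hy⟩ => hy ▸ norm_nonneg _⟩ (⟨k', hk'⟩ : K)

/-- Riesz: `1 - S` has closed range for `S` compact (given fin.dim. kernel, which is automatic). -/
lemma aux_closed_range (S : H →L[ℂ] H) (hS : IsCompactOperator (⇑S))
    (F : H →L[ℂ] H) (hF : ∀ x, F x = x - S x)
    (hker : FiniteDimensional ℂ (LinearMap.ker (F : H →ₗ[ℂ] H))) :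
    IsClosed ((LinearMap.range (F : H →ₗ[ℂ] H) : Submodule ℂ H) : Set H) := by
  set K := LinearMap.ker (F : H →ₗ[ℂ] H) with hK
  rw [← isSeqClosed_iff_isClosed]
  intro g y hg hgy
  choose x hx using hg
  -- minimal-norm representatives
  have hxk : ∀ n, ∃ k ∈ K, ∀ k' ∈ K, ‖x n - k‖ ≤ ‖x n - k'‖ := fun n => aux_min_dist K (x n)
  choose k hkK hkmin using hxk
  set w : ℕ → H := fun n => x n - k n with hw
  have hFw : ∀ n, F (w n) = g n := by
    intro n
    have : F (k n) = 0 := (LinearMap.mem_ker).1 (hkK n)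
    simpa [hw, map_sub, this] using hx n
  have hmin : ∀ n, ∀ k' ∈ K, ‖w n‖ ≤ ‖w n - k'‖ := by
    intro n k' hk'
    have : w n - k' = x n - (k n + k') := by rw [hw]; exact sub_sub _ _ _
    rw [this]
    exact hkmin n _ (K.add_mem (hkK n) hk')
  -- x = S x + F x
  have hdec : ∀ z : H, z = S z + F z := by intro z; rw [hF]; abel
  by_cases hbdd : ∃ C, ∀ n, ‖w n‖ ≤ C
  · obtain ⟨C, hC⟩ := hbdd
    obtain ⟨z, φ, hφ, hz⟩ := aux_compact_subseq S hS w C hC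
    have hgy' : Tendsto (fun l => F (w (φ l))) atTop (𝓝 y) := by
      simp only [hFw]
      exact hgy.comp hφ.tendsto_atTop
    have hwz : Tendsto (fun l => w (φ l)) atTop (𝓝 (z + y)) := by
      have : (fun l => w (φ l)) = fun l => S (w (φ l)) + F (w (φ l)) := by
        funext l; exact hdec _
      rw [this]
      exact hz.add hgy'
    have h1 : Tendsto (fun l => F (w (φ l))) atTop (𝓝 (F (z + y))) :=
      (F.continuous.tendsto _).comp hwz
    have h2 : F (z + y) = y := tendsto_nhds_unique h1 hgy'
    exact ⟨z + y, h2⟩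
  · exfalso
    push_neg at hbdd
    have hsel : ∀ j : ℕ, ∃ n, (j : ℝ) + 1 < ‖w n‖ := fun j => hbdd ((j : ℝ) + 1)
    choose n hn using hsel
    have hwpos : ∀ j, (0:ℝ) < ‖w (n j)‖ := fun j =>
      lt_of_le_of_lt (by positivity) (hn j)
    set u : ℕ → H := fun j => ((‖w (n j)‖ : ℂ))⁻¹ • w (n j) with hu
    have hunorm : ∀ j, ‖u j‖ = 1 := by
      intro j
      rw [hu]
      simp only [norm_smul, norm_inv, Complex.norm_real, Real.norm_eq_abs,
        abs_of_pos (hwpos j)]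
      rw [inv_mul_cancel₀ (hwpos j).ne']
    -- g is bounded
    obtain ⟨M, hM⟩ : ∃ M, ∀ m, ‖g m‖ ≤ M := by
      have h1 : Tendsto (fun m => ‖g m‖) atTop (𝓝 ‖y‖) := hgy.norm
      obtain ⟨M, hM⟩ := h1.bddAbove_range
      exact ⟨M, fun m => hM (Set.mem_range_self m)⟩
    have hM0 : 0 ≤ M := le_trans (norm_nonneg _) (hM 0)
    -- F u j → 0
    have hFu : ∀ j, F (u j) = ((‖w (n j)‖ : ℂ))⁻¹ • g (n j) := by
      intro j; rw [hu, map_smul, hFw]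
    have hFu0 : Tendsto (fun j => F (u j)) atTop (𝓝 0) := by
      rw [tendsto_zero_iff_norm_tendsto_zero]
      have hb : ∀ j, ‖F (u j)‖ ≤ M / ((j:ℝ) + 1) := by
        intro j
        rw [hFu]
        rw [norm_smul, norm_inv, Complex.norm_real, Real.norm_eq_abs, abs_of_pos (hwpos j)]
        calc ‖w (n j)‖⁻¹ * ‖g (n j)‖ ≤ ((j:ℝ)+1)⁻¹ * M :=
              mul_le_mul (by
                apply inv_anti₀ (by positivity) (hn j).le) (hM _) (norm_nonneg _)
                (by positivity)
          _ = M / ((j:ℝ)+1) := by rw [inv_mul_eq_div]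
      have hlim : Tendsto (fun j : ℕ => M / ((j:ℝ) + 1)) atTop (𝓝 0) := by
        exact tendsto_const_div_atTop_nhds_zero_nat M |>.comp (tendsto_add_atTop_nat 1) |>.congr
          (by intro j; simp)
      exact squeeze_zero (fun j => norm_nonneg _) hb hlim
    obtain ⟨z, φ, hφ, hz⟩ := aux_compact_subseq S hS u 1 (fun j => (hunorm j).le)
    have huz : Tendsto (fun l => u (φ l)) atTop (𝓝 z) := by
      have heq : (fun l => u (φ l)) = fun l => S (u (φ l)) + F (u (φ l)) := by
        funext l; exact hdec _
      rw [heq]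
      have : Tendsto (fun l => F (u (φ l))) atTop (𝓝 0) := hFu0.comp hφ.tendsto_atTop
      simpa using hz.add this
    have hzK : z ∈ K := by
      have h1 : Tendsto (fun l => F (u (φ l))) atTop (𝓝 (F z)) :=
        (F.continuous.tendsto _).comp huz
      have h2 : Tendsto (fun l => F (u (φ l))) atTop (𝓝 0) := hFu0.comp hφ.tendsto_atTop
      exact LinearMap.mem_ker.2 (tendsto_nhds_unique h1 h2)
    -- distance of u j to K is 1
    have hdist : ∀ j, (1:ℝ) ≤ ‖u j - z‖ := by
      intro j
      have h1 : u j - z = ((‖w (n j)‖:ℂ))⁻¹ • (w (n j) - (‖w (n j)‖:ℂ) • z) := by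
        rw [hu, smul_sub, smul_smul, inv_mul_cancel₀ (by exact_mod_cast (hwpos j).ne'), one_smul]
      rw [h1, norm_smul, norm_inv, Complex.norm_real, Real.norm_eq_abs, abs_of_pos (hwpos j)]
      rw [le_inv_mul_iff₀ (hwpos j), mul_one]
      exact hmin (n j) _ (K.smul_mem _ hzK)
    have : Tendsto (fun l => ‖u (φ l) - z‖) atTop (𝓝 0) := by
      have := (huz.sub (tendsto_const_nhds (x := z))).norm
      simpa using this
    have h01 : (1:ℝ) ≤ 0 := ge_of_tendsto' this (fun l => hdist (φ l))
    linarith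

/-- Root vectors for eigenvalue `ν ≠ λ` lie in the range of `(f - λ)^m` for all `m`. -/
lemma aux_maxGen_mem_range (f : Module.End ℂ H) {lam nu : ℂ} (hne : nu ≠ lam) (m : ℕ)
    {x : H} (hx : x ∈ f.maxGenEigenspace nu) :
    ∃ y, ((f - lam • 1) ^ m) y = x := by
  obtain ⟨kk, hkk⟩ := (Module.End.mem_maxGenEigenspace f nu x).1 hx
  set a : Module.End ℂ H := f - nu • 1 with ha
  set b : Module.End ℂ H := f - lam • 1 with hb
  set c : ℂ := nu - lam with hc
  have hc0 : c ≠ 0 := sub_ne_zero.2 hne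
  set K : Submodule ℂ H := LinearMap.ker (a ^ kk) with hKdef
  have hxK : x ∈ K := hkk
  have hbK : ∀ z ∈ K, b z ∈ K := by
    intro z hz
    have h0 : Commute a b := by
      have hf : Commute f (f - lam • (1 : Module.End ℂ H)) :=
        (Commute.refl f).sub_right ((Commute.one_right f).smul_right lam)
      have hnu : Commute (nu • (1 : Module.End ℂ H)) (f - lam • (1 : Module.End ℂ H)) :=
        ((Commute.one_left f).smul_left nu).sub_right
          (((Commute.refl (1 : Module.End ℂ H)).smul_left nu).smul_right lam)
      exact hf.sub_left hnu
    have hcomm : a ^ kk * b = b * a ^ kk := ((h0.pow_left kk)).eq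
    have : (a ^ kk) (b z) = b ((a ^ kk) z) := by
      rw [← Module.End.mul_apply, hcomm, Module.End.mul_apply]
    simp only [hKdef, LinearMap.mem_ker] at hz ⊢
    rw [this, hz, map_zero]
  have haK : ∀ z ∈ K, a z ∈ K := by
    intro z hz
    have : (a ^ kk) (a z) = a ((a ^ kk) z) := by
      rw [← Module.End.mul_apply, ← pow_succ, pow_succ', Module.End.mul_apply]
    simp only [hKdef, LinearMap.mem_ker] at hz ⊢
    rw [this, hz, map_zero]
  set ar : Module.End ℂ K := a.restrict haK with har
  set br : Module.End ℂ K := b.restrict hbK with hbr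
  have hnil : IsNilpotent ar := by
    refine ⟨kk, ?_⟩
    rw [har, Module.End.pow_restrict]
    apply LinearMap.ext; intro z
    apply Subtype.ext
    have hz : (a ^ kk) (z : H) = 0 := z.2
    simp only [LinearMap.restrict_coe_apply, hz, LinearMap.zero_apply, ZeroMemClass.coe_zero]
  have hbr_eq : br = c • 1 + ar := by
    apply LinearMap.ext; intro z
    apply Subtype.ext
    have h1 : b (z : H) = c • (z : H) + a (z : H) := by
      simp only [ha, hb, hc, LinearMap.sub_apply, LinearMap.smul_apply, Module.End.one_apply,
        sub_smul]
      abel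
    simp only [hbr, har, LinearMap.add_apply, LinearMap.smul_apply, Module.End.one_apply,
      Submodule.coe_add, SetLike.val_smul, LinearMap.restrict_coe_apply, h1]
  have hcu : IsUnit (c • (1 : Module.End ℂ K)) := by
    have h1 : (c • (1 : Module.End ℂ K)) * (c⁻¹ • 1) = 1 := by
      rw [smul_mul_smul_comm, one_mul, mul_inv_cancel₀ hc0, one_smul]
    have h2 : (c⁻¹ • (1 : Module.End ℂ K)) * (c • 1) = 1 := by
      rw [smul_mul_smul_comm, one_mul, inv_mul_cancel₀ hc0, one_smul]
    exact ⟨⟨c • 1, c⁻¹ • 1, h1, h2⟩, rfl⟩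
  have hbru : IsUnit br := by
    rw [hbr_eq]
    exact hnil.isUnit_add_left_of_commute hcu ((Commute.one_right ar).smul_right c)
  obtain ⟨e, he⟩ := hbru.pow m
  set yK : K := (↑e⁻¹ : Module.End ℂ K) ⟨x, hxK⟩ with hy
  have hbry : (br ^ m) yK = ⟨x, hxK⟩ := by
    rw [hy, ← Module.End.mul_apply, ← he, Units.mul_inv, Module.End.one_apply]
  refine ⟨(yK : H), ?_⟩
  have : br ^ m = (b ^ m).restrict (Module.End.pow_apply_mem_of_forall_mem m hbK) := by
    rw [hbr, Module.End.pow_restrict]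
  rw [this] at hbry
  have := congrArg Subtype.val hbry
  simpa [LinearMap.restrict_apply] using this

lemma aux_pow_decomp (T : H →L[ℂ] H) (lam : ℂ) (n : ℕ) :
    ∃ Q : H →L[ℂ] H, (T - lam • 1) ^ n = ((-lam) ^ n) • 1 + T * Q := by
  induction n with
  | zero => exact ⟨0, by simp⟩
  | succ n ih =>
    obtain ⟨Q, hQ⟩ := ih
    refine ⟨(-lam) ^ n • 1 + Q * (T - lam • 1), ?_⟩
    rw [pow_succ, hQ, add_mul, smul_mul_assoc, one_mul, mul_add, mul_smul_comm, mul_one,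
      mul_assoc]
    rw [smul_sub, pow_succ]
    match_scalars <;> ring

lemma aux_coe_pow (T : H →L[ℂ] H) (lam : ℂ) (k : ℕ) :
    (((T - lam • 1) ^ k : H →L[ℂ] H) : H →ₗ[ℂ] H)
      = ((T : H →ₗ[ℂ] H) - lam • 1) ^ k := by
  induction k with
  | zero => rfl
  | succ n ih =>
    rw [pow_succ, pow_succ, ← ih]
    rfl

end Aux

/-- for a compact operator `T` on a Hilbert space with trivial kernel,
the system of root vectors (unions of bases of the root subspaces over all nonzero
eigenvalues) is minimal: no vector of the system lies in the closed linear span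
of the remaining ones. -/
theorem stmt3 {H : Type*} [NormedAddCommGroup H] [InnerProductSpace ℂ H]
    [CompleteSpace H]
    (T : H →L[ℂ] H) (hT : IsCompactOperator (⇑T))
    (hker : LinearMap.ker (T : H →ₗ[ℂ] H) = ⊥)
    {ι : Type*} (μ : ι → ℂ) (hμinj : Function.Injective μ) (hμ0 : ∀ i, μ i ≠ 0)
    (hμeig : ∀ i, Module.End.HasEigenvalue (T : H →ₗ[ℂ] H) (μ i))
    (hμall : ∀ l : ℂ, l ≠ 0 → Module.End.HasEigenvalue (T : H →ₗ[ℂ] H) l → ∃ i, μ i = l)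
    (d : ι → ℕ) (v : (Σ i, Fin (d i)) → H)
    (hvmem : ∀ i (p : Fin (d i)),
      v ⟨i, p⟩ ∈ Module.End.maxGenEigenspace (T : H →ₗ[ℂ] H) (μ i))
    (hvspan : ∀ i, Submodule.span ℂ (Set.range fun p : Fin (d i) => v ⟨i, p⟩)
        = Module.End.maxGenEigenspace (T : H →ₗ[ℂ] H) (μ i))
    (hvli : ∀ i, LinearIndependent ℂ fun p : Fin (d i) => v ⟨i, p⟩) :
    ∀ j : Σ i, Fin (d i),
      v j ∉ closure (Submodule.span ℂ (v '' {j' | j' ≠ j}) : Set H) := by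
  rintro ⟨i₀, q⟩ hmem
  set f : Module.End ℂ H := (T : H →ₗ[ℂ] H) with hf
  set lam : ℂ := μ i₀ with hlam
  set N : Submodule ℂ H := f.maxGenEigenspace lam with hNdef
  set b : Module.End ℂ H := f - lam • 1 with hb
  have hN : FiniteDimensional ℂ N := by
    rw [hNdef, ← hvspan i₀]
    exact FiniteDimensional.span_of_finite ℂ (Set.finite_range _)
  -- choose a uniform power m with N = ker (b ^ m)
  have hkex : ∀ p : Fin (d i₀), ∃ k, (b ^ k) (v ⟨i₀, p⟩) = 0 := fun p =>
    (Module.End.mem_maxGenEigenspace f lam _).1 (hvmem i₀ p)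
  choose kk hkk using hkex
  set m : ℕ := (Finset.univ.sup kk) + 1 with hm
  have hNker : N = LinearMap.ker (b ^ m) := by
    apply le_antisymm
    · rw [hNdef, ← hvspan i₀]
      rw [Submodule.span_le]
      rintro x ⟨p, rfl⟩
      simp only [SetLike.mem_coe, LinearMap.mem_ker]
      have hle : kk p ≤ m := le_trans (Finset.le_sup (Finset.mem_univ p)) (Nat.le_succ _)
      have : b ^ m = b ^ (m - kk p) * b ^ (kk p) := by
        rw [← pow_add, Nat.sub_add_cancel hle]
      rw [this, Module.End.mul_apply, hkk p, map_zero]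
    · intro x hx
      exact (Module.End.mem_maxGenEigenspace f lam x).2 ⟨m, hx⟩
  -- continuous linear map side
  set A : H →L[ℂ] H := T - lam • 1 with hA
  have hcoe : ∀ k : ℕ, ∀ x : H, ((A ^ k) x : H) = (b ^ k) x := by
    intro k x
    have := aux_coe_pow T lam k
    exact DFunLike.congr_fun this x
  obtain ⟨Q, hQ⟩ := aux_pow_decomp T lam m
  set c : ℂ := (-lam) ^ m with hc
  have hc0 : c ≠ 0 := pow_ne_zero _ (neg_ne_zero.2 (hμ0 i₀))
  set S : H →L[ℂ] H := (-c⁻¹) • (T * Q) with hS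
  set F : H →L[ℂ] H := 1 - S with hF
  have hFx : ∀ x, F x = x - S x := fun x => by simp [hF]
  have hAF : ∀ x : H, (b ^ m) x = c • F x := by
    intro x
    rw [← hcoe]
    have h1 : (A ^ m) = c • F := by
      have h2 : c • S = -(T * Q) := by
        rw [hS, smul_smul, mul_neg, mul_inv_cancel₀ hc0]
        simp
      rw [hQ, hF, smul_sub, h2, sub_neg_eq_add]
    rw [h1]
    rfl
  have hScomp : IsCompactOperator (⇑S) := by
    have h1 : ⇑S = (-c⁻¹) • (⇑T ∘ ⇑Q) := by
      funext x; simp [hS]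
    rw [h1]
    exact (hT.comp_clm Q).smul _
  -- kernel of F is N
  have hkerF : LinearMap.ker (F : H →ₗ[ℂ] H) = N := by
    ext x
    simp only [LinearMap.mem_ker, ContinuousLinearMap.coe_coe]
    rw [hNker, LinearMap.mem_ker]
    constructor
    · intro h; rw [hAF, h, smul_zero]
    · intro h; rw [hAF] at h
      exact (smul_eq_zero.1 h).resolve_left hc0
  have hkerFfin : FiniteDimensional ℂ (LinearMap.ker (F : H →ₗ[ℂ] H)) := by rw [hkerF]; exact hN
  -- range of F
  set R : Submodule ℂ H := LinearMap.range (F : H →ₗ[ℂ] H) with hR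
  have hmemR : ∀ x : H, x ∈ R ↔ ∃ y, (b ^ m) y = x := by
    intro x
    constructor
    · rintro ⟨y, rfl⟩
      exact ⟨c⁻¹ • y, by rw [ContinuousLinearMap.coe_coe, map_smul, hAF, smul_smul, inv_mul_cancel₀ hc0, one_smul]⟩
    · rintro ⟨y, rfl⟩
      exact ⟨c • y, by rw [ContinuousLinearMap.coe_coe, map_smul, hAF, ← map_smul]⟩
  have hRclosed : IsClosed (R : Set H) := aux_closed_range S hScomp F hFx hkerFfin
  -- N ∩ R = 0
  have hNR : ∀ x, x ∈ N → x ∈ R → x = 0 := by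
    intro x hxN hxR
    obtain ⟨y, hy⟩ := (hmemR x).1 hxR
    have hxker : (b ^ m) x = 0 := by rw [hNker] at hxN; exact hxN
    have h2 : (b ^ (m + m)) y = 0 := by
      rw [pow_add, Module.End.mul_apply, hy, hxker]
    have hyN : y ∈ N := (Module.End.mem_maxGenEigenspace f lam y).2 ⟨m + m, h2⟩
    rw [hNker, LinearMap.mem_ker] at hyN
    rw [← hy, hyN]
  -- other root vectors lie in R
  have hother : ∀ (i : ι), i ≠ i₀ → ∀ p : Fin (d i), v ⟨i, p⟩ ∈ R := by
    intro i hi p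
    have hne : μ i ≠ lam := fun h => hi (hμinj h)
    obtain ⟨y, hy⟩ := aux_maxGen_mem_range f hne m (hvmem i p)
    exact (hmemR _).2 ⟨y, hy⟩
  -- the span of the other basis vectors of N
  set W : Submodule ℂ H :=
    Submodule.span ℂ ((fun p : Fin (d i₀) => v ⟨i₀, p⟩) '' {p | p ≠ q}) with hW
  have hWN : W ≤ N := by
    rw [hW, Submodule.span_le]
    rintro x ⟨p, -, rfl⟩
    exact hvmem i₀ p
  have hWfin : FiniteDimensional ℂ W :=
    FiniteDimensional.span_of_finite ℂ ((Set.finite_univ.subset (Set.subset_univ _)).image _)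
  -- span of all other root vectors is inside W ⊔ R
  have hspan_le : Submodule.span ℂ (v '' {j' | j' ≠ ⟨i₀, q⟩}) ≤ W ⊔ R := by
    rw [Submodule.span_le]
    rintro x ⟨⟨i, p⟩, hne, rfl⟩
    by_cases hi : i = i₀
    · subst hi
      have hpq : p ≠ q := by
        intro h; subst h; exact hne rfl
      apply Submodule.mem_sup_left
      exact Submodule.subset_span ⟨p, hpq, rfl⟩
    · exact Submodule.mem_sup_right (hother i hi p)
  -- W ⊔ R is closed
  have hsupclosed : IsClosed ((W ⊔ R : Submodule ℂ H) : Set H) := by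
    haveI : IsClosed (R : Set H) := hRclosed
    have hcont : Continuous R.mkQ := continuous_quot_mk
    haveI : FiniteDimensional ℂ (W.map R.mkQ) := Module.Finite.map W R.mkQ
    have heq : ((W ⊔ R : Submodule ℂ H) : Set H) = R.mkQ ⁻¹' (W.map R.mkQ : Set (H ⧸ R)) := by
      rw [sup_comm, ← Submodule.comap_map_mkQ R W]
      rfl
    rw [heq]
    exact (Submodule.closed_of_finiteDimensional (W.map R.mkQ)).preimage hcont
  -- conclude
  have hsub : closure (Submodule.span ℂ (v '' {j' | j' ≠ ⟨i₀, q⟩}) : Set H)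
      ⊆ ((W ⊔ R : Submodule ℂ H) : Set H) :=
    closure_minimal hspan_le hsupclosed
  have hvmemsup : v ⟨i₀, q⟩ ∈ W ⊔ R := hsub hmem
  obtain ⟨w, hw, r, hr, hwr⟩ := Submodule.mem_sup.1 hvmemsup
  have hrN : r ∈ N := by
    have : r = v ⟨i₀, q⟩ - w := by rw [← hwr]; abel
    rw [this]
    exact N.sub_mem (hvmem i₀ q) (hWN hw)
  have hr0 : r = 0 := hNR r hrN hr
  have hvW : v ⟨i₀, q⟩ ∈ W := by
    rw [← hwr, hr0, add_zero]; exact hw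
  exact (hvli i₀).notMem_span_image (by simp : q ∉ {p : Fin (d i₀) | p ≠ q}) hvW
end

section
/- Let T be a compact operator on a Hilbert space H with ker T = {0}, let λ ≠ 0 be an eigenvalue of T, and let {e_p}_{p=1}^{m} be a basis of the root subspace N_λ(T) and {f_k}_{k=1}^{m} a basis of N_{λ̄}(T*). Then the Gram matrix G = (⟨e_p, f_k⟩)_{p,k=1}^{m} is nonsingular. -/
section Stmt5Aux

variable {H : Type*} [NormedAddCommGroup H] [InnerProductSpace ℂ H] [CompleteSpace H]

/-- A compact perturbation of a nonzero multiple of the identity is bounded below on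
the orthogonal complement of its kernel. -/
lemma stmt5_aux_bdd_below (S : H →L[ℂ] H) (c : ℂ) (hc : c ≠ 0)
    (hK : IsCompactOperator (⇑(S - c • (1 : H →L[ℂ] H)))) :
    ∃ r : ℝ, 0 < r ∧ ∀ x ∈ (LinearMap.ker (S : H →ₗ[ℂ] H))ᗮ, r * ‖x‖ ≤ ‖S x‖ := by
  by_contra hcon
  push_neg at hcon
  have key : ∀ n : ℕ, ∃ u : H, u ∈ (LinearMap.ker (S : H →ₗ[ℂ] H))ᗮ ∧ ‖u‖ = 1 ∧
      ‖S u‖ < 1 / (n + 1) := by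
    intro n
    obtain ⟨x, hxM, hx⟩ := hcon (1 / (n + 1)) (by positivity)
    have hx0 : x ≠ 0 := by
      rintro rfl
      simp at hx
    refine ⟨‖x‖⁻¹ • x, Submodule.smul_mem _ _ hxM, norm_smul_inv_norm hx0, ?_⟩
    rw [ContinuousLinearMap.map_smul_of_tower, norm_smul, norm_inv, norm_norm]
    calc ‖x‖⁻¹ * ‖S x‖ < ‖x‖⁻¹ * (1 / (n + 1) * ‖x‖) := by
          exact mul_lt_mul_of_pos_left hx (inv_pos.2 (norm_pos_iff.2 hx0))
      _ = 1 / (n + 1) := by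
          rw [mul_comm (1 / ((n:ℝ) + 1)) ‖x‖, ← mul_assoc,
            inv_mul_cancel₀ (norm_ne_zero_iff.2 hx0), one_mul]
  choose u huM hu1 huS using key
  have hS0 : Filter.Tendsto (fun n => S (u n)) Filter.atTop (nhds 0) := by
    rw [tendsto_zero_iff_norm_tendsto_zero]
    refine squeeze_zero (fun n => norm_nonneg _) (fun n => (huS n).le) ?_
    exact tendsto_one_div_add_atTop_nhds_zero_nat
  obtain ⟨K, hKc, hKsub⟩ := hK.image_subset_compact_of_bounded
    (f := ((S - c • (1 : H →L[ℂ] H)) : H →ₗ[ℂ] H))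
    (Metric.isBounded_closedBall (x := (0:H)) (r := 1))
  have hmem : ∀ n, (S - c • (1 : H →L[ℂ] H)) (u n) ∈ K := fun n =>
    hKsub ⟨u n, by simp [hu1 n], rfl⟩
  obtain ⟨a, -, φ, hφ, ha⟩ := hKc.tendsto_subseq hmem
  have hulim : Filter.Tendsto (fun n => u (φ n)) Filter.atTop (nhds (c⁻¹ • (-a))) := by
    have h1 : Filter.Tendsto (fun n => c • u (φ n)) Filter.atTop (nhds (-a)) := by
      have : (fun n => c • u (φ n))
          = fun n => S (u (φ n)) - (S - c • (1 : H →L[ℂ] H)) (u (φ n)) := by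
        funext n; simp
      rw [this]
      simpa using ((hS0.comp hφ.tendsto_atTop).sub ha)
    have := h1.const_smul c⁻¹
    simpa [smul_smul, inv_mul_cancel₀ hc] using this
  set w := c⁻¹ • (-a) with hw
  have hwM : w ∈ (LinearMap.ker (S : H →ₗ[ℂ] H))ᗮ :=
    (LinearMap.ker (S : H →ₗ[ℂ] H)).isClosed_orthogonal.mem_of_tendsto hulim
      (Filter.Eventually.of_forall fun n => huM (φ n))
  have hw1 : ‖w‖ = 1 := by
    have h := hulim.norm
    simp only [hu1] at h
    exact (tendsto_nhds_unique h tendsto_const_nhds)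
  have hwker : w ∈ LinearMap.ker (S : H →ₗ[ℂ] H) := by
    have h2 : Filter.Tendsto (fun n => S (u (φ n))) Filter.atTop (nhds (S w)) :=
      (S.continuous.tendsto w).comp hulim
    have h3 : Filter.Tendsto (fun n => S (u (φ n))) Filter.atTop (nhds 0) :=
      hS0.comp hφ.tendsto_atTop
    simpa [LinearMap.mem_ker] using tendsto_nhds_unique h2 h3
  have : w = 0 := (Submodule.orthogonal_disjoint (LinearMap.ker (S : H →ₗ[ℂ] H))).le_bot ⟨hwker, hwM⟩
  rw [this] at hw1
  simp at hw1

/-- A compact perturbation of a nonzero multiple of the identity has closed range. -/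
lemma stmt5_aux_closed_range (S : H →L[ℂ] H) (c : ℂ) (hc : c ≠ 0)
    (hK : IsCompactOperator (⇑(S - c • (1 : H →L[ℂ] H)))) :
    IsClosed ((LinearMap.range (S : H →ₗ[ℂ] H) : Submodule ℂ H) : Set H) := by
  obtain ⟨r, hr, hbd⟩ := stmt5_aux_bdd_below S c hc hK
  set M := (LinearMap.ker (S : H →ₗ[ℂ] H))ᗮ with hM
  haveI : CompleteSpace M := (LinearMap.ker (S : H →ₗ[ℂ] H)).isClosed_orthogonal.completeSpace_coe
  set g : M →L[ℂ] H := S.comp (Submodule.subtypeL M) with hg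
  have hanti : AntilipschitzWith (r⁻¹).toNNReal g := by
    apply g.antilipschitz_of_bound
    intro x
    have h1 := hbd x x.2
    have h2 : ((r⁻¹).toNNReal : ℝ) = r⁻¹ := Real.coe_toNNReal _ (inv_pos.2 hr).le
    rw [h2]
    have : ‖g x‖ = ‖S (x : H)‖ := rfl
    rw [this]
    rw [← sub_nonneg]
    have hx : ‖(x : M)‖ = ‖(x : H)‖ := rfl
    calc (0:ℝ) ≤ r⁻¹ * (‖S (x:H)‖ - r * ‖(x:H)‖) := by
          have := sub_nonneg.2 h1
          positivity
      _ = r⁻¹ * ‖S (x:H)‖ - ‖(x:H)‖ := by field_simp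
      _ = r⁻¹ * ‖S (x:H)‖ - ‖x‖ := by rw [hx]
  have hclosed : IsClosed (Set.range ⇑g) := hanti.isClosed_range g.uniformContinuous
  have hEq : Set.range ⇑g = ((LinearMap.range (S : H →ₗ[ℂ] H) : Submodule ℂ H) : Set H) := by
    ext y
    constructor
    · rintro ⟨x, rfl⟩
      exact ⟨(x : H), rfl⟩
    · rintro ⟨x, rfl⟩
      obtain ⟨k, hk, z, hz, rfl⟩ := (LinearMap.ker (S : H →ₗ[ℂ] H)).exists_add_mem_mem_orthogonal x
      refine ⟨⟨z, hz⟩, ?_⟩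
      have : S k = 0 := hk
      simp [hg, this]
  rwa [hEq] at hclosed

/-- The kernel of the adjoint is the orthogonal complement of the range. -/
lemma stmt5_aux_ker_adjoint (S : H →L[ℂ] H) :
    LinearMap.ker ((ContinuousLinearMap.adjoint S : H →L[ℂ] H) : H →ₗ[ℂ] H) = (LinearMap.range (S : H →ₗ[ℂ] H))ᗮ := by
  ext y
  simp only [LinearMap.mem_ker, Submodule.mem_orthogonal, ContinuousLinearMap.coe_coe]
  constructor
  · rintro h u ⟨x, rfl⟩
    rw [ContinuousLinearMap.coe_coe, ← ContinuousLinearMap.adjoint_inner_right]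
    simp [h]
  · intro h
    rw [← inner_self_eq_zero (𝕜 := ℂ) (x := ContinuousLinearMap.adjoint S y)]
    rw [ContinuousLinearMap.adjoint_inner_right]
    exact h _ ⟨_, rfl⟩

/-- `(T - l)^n - (-l)^n` is a compact operator whenever `T` is. -/
lemma stmt5_aux_compact_pow (T : H →L[ℂ] H) (hT : IsCompactOperator (⇑T)) (l : ℂ) (n : ℕ) :
    IsCompactOperator (⇑((T - l • (1 : H →L[ℂ] H)) ^ n - ((-l) ^ n) • (1 : H →L[ℂ] H))) := by
  induction n with
  | zero =>
      have : ((T - l • (1 : H →L[ℂ] H)) ^ 0 - ((-l) ^ 0) • (1 : H →L[ℂ] H)) = 0 := by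
        simp
      rw [this]
      simpa using isCompactOperator_zero
  | succ n ih =>
      set P := T - l • (1 : H →L[ℂ] H) with hP
      have key : P ^ (n + 1) - ((-l) ^ (n + 1)) • (1 : H →L[ℂ] H)
          = P * (P ^ n - ((-l) ^ n) • (1 : H →L[ℂ] H)) + ((-l) ^ n) • T := by
        have hT' : T = P + l • (1 : H →L[ℂ] H) := by rw [hP]; abel
        rw [hT']
        rw [mul_sub, ← pow_succ', mul_smul_comm, mul_one, smul_add, smul_smul]
        rw [show ((-l) ^ (n + 1) : ℂ) = -((-l) ^ n * l) by ring, neg_smul]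
        abel
      have hA : IsCompactOperator (⇑(P * (P ^ n - ((-l) ^ n) • (1 : H →L[ℂ] H)))) := by
        rw [ContinuousLinearMap.mul_def, ContinuousLinearMap.coe_comp']
        exact ih.continuous_comp P.continuous
      have hB : IsCompactOperator (⇑(((-l) ^ n) • T)) := by
        rw [ContinuousLinearMap.coe_smul']
        exact hT.smul _
      rw [key, ContinuousLinearMap.coe_add']
      exact hA.add hB

/-- Pointwise comparison of continuous-linear-map powers and endomorphism powers. -/
lemma stmt5_aux_pow_apply (T : H →L[ℂ] H) (l : ℂ) (n : ℕ) (x : H) :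
    ((T - l • (1 : H →L[ℂ] H)) ^ n) x
      = ((((T : H →ₗ[ℂ] H) - l • (1 : H →ₗ[ℂ] H))) ^ n) x := by
  induction n generalizing x with
  | zero => simp
  | succ n ih =>
      rw [pow_succ, pow_succ, ContinuousLinearMap.mul_apply, Module.End.mul_apply]
      rw [ih]
      simp

end Stmt5Aux

/-- for a compact injective operator `T` on a Hilbert space, a nonzero
eigenvalue `l`, a basis `e` of the root subspace `N_l(T)` and a basis `f` of
`N_{l̄}(T*)`, the Gram matrix `(⟨e p, f k⟩)` is nonsingular. -/
theorem stmt5 {H : Type*} [NormedAddCommGroup H] [InnerProductSpace ℂ H]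
    [CompleteSpace H]
    (T : H →L[ℂ] H) (hT : IsCompactOperator (⇑T)) (hker : LinearMap.ker (T : H →ₗ[ℂ] H) = ⊥)
    (l : ℂ) (hl : l ≠ 0) (hle : Module.End.HasEigenvalue (T : H →ₗ[ℂ] H) l)
    (m : ℕ) (e f : Fin m → H)
    (hemem : ∀ p, e p ∈ Module.End.maxGenEigenspace (T : H →ₗ[ℂ] H) l)
    (hespan : Submodule.span ℂ (Set.range e)
        = Module.End.maxGenEigenspace (T : H →ₗ[ℂ] H) l)
    (heli : LinearIndependent ℂ e)
    (hfmem : ∀ k, f k ∈ Module.End.maxGenEigenspace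
        ((ContinuousLinearMap.adjoint T : H →L[ℂ] H) : H →ₗ[ℂ] H) (starRingEnd ℂ l))
    (hfspan : Submodule.span ℂ (Set.range f)
        = Module.End.maxGenEigenspace
            ((ContinuousLinearMap.adjoint T : H →L[ℂ] H) : H →ₗ[ℂ] H) (starRingEnd ℂ l))
    (hfli : LinearIndependent ℂ f) :
    (Matrix.of fun p k : Fin m => (inner ℂ (e p) (f k) : ℂ)).det ≠ 0 := by
  intro hdet
  classical
  set g : Module.End ℂ H := (T : H →ₗ[ℂ] H) with hgdef
  -- choose a uniform exponent `n`
  have hpk : ∀ p, ∃ k : ℕ, ((g - l • 1) ^ k) (e p) = 0 := by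
    intro p
    simpa [Module.End.mem_maxGenEigenspace] using hemem p
  choose kk hkk using hpk
  set n : ℕ := Finset.univ.sup kk with hn
  -- the continuous linear map `S = (T - l)^n`
  set S : H →L[ℂ] H := (T - l • (1 : H →L[ℂ] H)) ^ n with hSdef
  have hSapp : ∀ x, S x = ((g - l • 1) ^ n) x := fun x => stmt5_aux_pow_apply T l n x
  -- the root subspace equals `ker S`
  have hVle : Module.End.maxGenEigenspace g l ≤ (g - l • 1).iterateKer n := by
    rw [← hespan]
    rw [Submodule.span_le]
    rintro - ⟨p, rfl⟩
    have h1 : e p ∈ (g - l • 1).iterateKer (kk p) := hkk p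
    exact (g - l • 1).iterateKer.monotone (Finset.le_sup (Finset.mem_univ p)) h1
  have hVge : ∀ x : H, ((g - l • 1) ^ n) x = 0 → x ∈ Module.End.maxGenEigenspace g l := by
    intro x hx
    exact (Module.End.mem_maxGenEigenspace g l x).2 ⟨n, hx⟩
  -- the nonzero vector coming from the singular Gram matrix
  obtain ⟨v, hv0, hveq⟩ := Matrix.exists_vecMul_eq_zero_iff.mpr hdet
  set x : H := ∑ p, (starRingEnd ℂ (v p)) • e p with hxdef
  have hx0 : x ≠ 0 := by
    intro h
    apply hv0
    have := Fintype.linearIndependent_iff.1 heli (fun p => starRingEnd ℂ (v p)) h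
    funext p
    have hp := this p
    simpa using congrArg (starRingEnd ℂ) hp
  have hxV : x ∈ Module.End.maxGenEigenspace g l :=
    Submodule.sum_mem _ fun p _ => Submodule.smul_mem _ _ (hemem p)
  have hxinner : ∀ k, (inner ℂ x (f k) : ℂ) = 0 := by
    intro k
    have hcol := congrFun hveq k
    simp only [Matrix.vecMul, dotProduct, Matrix.of_apply, Pi.zero_apply] at hcol
    rw [hxdef]
    rw [sum_inner]
    simp only [inner_smul_left, RingHom.id_apply, starRingEnd_self_apply]
    simpa using hcol
  -- `x` is orthogonal to the root subspace of the adjoint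
  set W := Module.End.maxGenEigenspace
      ((ContinuousLinearMap.adjoint T : H →L[ℂ] H) : H →ₗ[ℂ] H) (starRingEnd ℂ l) with hWdef
  have hxW : x ∈ Wᗮ := by
    rw [Submodule.mem_orthogonal']
    intro u hu
    rw [← hfspan] at hu
    induction hu using Submodule.span_induction with
    | mem u hu => obtain ⟨k, rfl⟩ := hu; exact hxinner k
    | zero => exact inner_zero_right x
    | add u w _ _ h1 h2 => rw [inner_add_right, h1, h2, add_zero]
    | smul c u _ h1 => rw [inner_smul_right, h1, mul_zero]
  -- the adjoint of `S`
  have hadjS : ContinuousLinearMap.adjoint S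
      = (ContinuousLinearMap.adjoint T - (starRingEnd ℂ l) • (1 : H →L[ℂ] H)) ^ n := by
    rw [hSdef, ← ContinuousLinearMap.star_eq_adjoint, ← ContinuousLinearMap.star_eq_adjoint,
      star_pow, star_sub, star_smul, star_one]
    rfl
  -- `ker (adjoint S) ≤ W`
  have hkerle : LinearMap.ker ((ContinuousLinearMap.adjoint S : H →L[ℂ] H) : H →ₗ[ℂ] H) ≤ W := by
    intro y hy
    rw [LinearMap.mem_ker, hadjS, ContinuousLinearMap.coe_coe] at hy
    rw [stmt5_aux_pow_apply] at hy
    exact (Module.End.mem_maxGenEigenspace _ _ y).2 ⟨n, hy⟩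
  -- `S` has closed range
  have hcompact : IsCompactOperator (⇑(S - ((-l) ^ n) • (1 : H →L[ℂ] H))) := by
    rw [hSdef]
    exact stmt5_aux_compact_pow T hT l n
  have hcl : IsClosed ((LinearMap.range (S : H →ₗ[ℂ] H) : Submodule ℂ H) : Set H) :=
    stmt5_aux_closed_range S ((-l) ^ n) (pow_ne_zero _ (neg_ne_zero.2 hl)) hcompact
  -- hence `x` lies in the range of `S`
  have hxrange : x ∈ LinearMap.range (S : H →ₗ[ℂ] H) := by
    have h1 : x ∈ (LinearMap.ker ((ContinuousLinearMap.adjoint S : H →L[ℂ] H) : H →ₗ[ℂ] H))ᗮ :=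
      Submodule.orthogonal_le hkerle hxW
    rw [stmt5_aux_ker_adjoint, Submodule.orthogonal_orthogonal_eq_closure] at h1
    have h2 : (LinearMap.range (S : H →ₗ[ℂ] H)).topologicalClosure = LinearMap.range (S : H →ₗ[ℂ] H) :=
      SetLike.ext' (by rw [Submodule.topologicalClosure_coe, hcl.closure_eq])
    rwa [h2] at h1
  obtain ⟨y, hy⟩ := hxrange
  rw [ContinuousLinearMap.coe_coe] at hy
  -- but `x ∈ ker S`, so `y` lies in the `2n`-th kernel, which is the `n`-th kernel
  have hSx : S x = 0 := by
    rw [hSapp]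
    exact hVle hxV
  have hyy : ((g - l • 1) ^ (n + n)) y = 0 := by
    rw [pow_add, Module.End.mul_apply]
    rw [← hSapp, ← hSapp, hy, hSx]
  have hyV : y ∈ Module.End.maxGenEigenspace g l :=
    (Module.End.mem_maxGenEigenspace g l y).2 ⟨n + n, hyy⟩
  have : x = 0 := by
    rw [← hy, hSapp]
    exact hVle hyV
  exact hx0 this
end

section
/- Let B = diag(b_1,...,b_n) be diagonal nonsingular, and suppose the split boundary conditions (C with last n-k rows zero, D with first k rows zero) are regular, i.e., det T_{zB}(C,D) ≠ 0 for every admissible z ∈ ℂ. Then n = 2k and κ_+(Re(zB)) = κ_-(Re(zB)) = k for every admissible z. -/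
open Matrix Finset

/-- If more than `R.card` columns (those in `S`) of a square matrix are supported
on the rows in `R`, then the determinant vanishes. -/
lemma aux_det_zero {n : ℕ} (T : Matrix (Fin n) (Fin n) ℂ) (S R : Finset (Fin n))
    (hcard : R.card < S.card) (hT : ∀ i j, j ∈ S → i ∉ R → T i j = 0) :
    T.det = 0 := by
  rw [← Matrix.exists_mulVec_eq_zero_iff]
  let M : Matrix ↥R ↥S ℂ := fun i j => T i.1 j.1
  have hninj : ¬ Function.Injective M.mulVecLin := by
    intro h
    have := LinearMap.finrank_le_finrank_of_injective h
    simp only [Module.finrank_pi, Fintype.card_coe] at this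
    omega
  rw [Function.not_injective_iff] at hninj
  obtain ⟨x, y, hxy, hne⟩ := hninj
  set v : ↥S → ℂ := x - y with hvdef
  have hv0 : M *ᵥ v = 0 := by
    have : M.mulVecLin (x - y) = 0 := by rw [map_sub, hxy, sub_self]
    simpa [Matrix.mulVecLin] using this
  have hvne : v ≠ 0 := sub_ne_zero.mpr hne
  refine ⟨fun j => if h : j ∈ S then v ⟨j, h⟩ else 0, ?_, ?_⟩
  · obtain ⟨j0, hj0⟩ := Function.ne_iff.mp hvne
    intro h
    apply hj0
    have := congrFun h j0.1
    simpa [j0.2] using this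
  · ext i
    simp only [Matrix.mulVec, dotProduct, Pi.zero_apply]
    have hstep1 : ∑ j ∈ S, T i j * (if h : j ∈ S then v ⟨j, h⟩ else 0)
        = ∑ j : Fin n, T i j * (if h : j ∈ S then v ⟨j, h⟩ else 0) := by
      refine Finset.sum_subset (Finset.subset_univ S) ?_
      intro j _ hj
      rw [dif_neg hj, mul_zero]
    have hstep2 : ∑ j ∈ S, T i j * (if h : j ∈ S then v ⟨j, h⟩ else 0)
        = ∑ j ∈ S.attach, T i j.1 * v j := by
      rw [← Finset.sum_attach S (fun j => T i j * (if h : j ∈ S then v ⟨j, h⟩ else 0))]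
      refine Finset.sum_congr rfl ?_
      intro j _
      rw [dif_pos j.2]
    rw [← hstep1, hstep2]
    by_cases hi : i ∈ R
    · have := congrFun hv0 ⟨i, hi⟩
      simpa [Matrix.mulVec, dotProduct, M, Finset.univ_eq_attach] using this
    · refine Finset.sum_eq_zero ?_
      intro j _
      rw [hT i j.1 j.2 hi, zero_mul]

lemma card_filter_lt {n k : ℕ} (hk : k ≤ n) :
    (Finset.univ.filter fun i : Fin n => (i : ℕ) < k).card = k := by
  have : (Finset.univ.filter fun i : Fin n => (i : ℕ) < k)
      = Finset.map (Fin.castLEEmb hk) Finset.univ := by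
    ext i
    simp only [Finset.mem_filter, Finset.mem_univ, true_and, Finset.mem_map,
      Fin.castLEEmb_apply]
    constructor
    · intro h
      exact ⟨⟨i, h⟩, rfl⟩
    · rintro ⟨a, rfl⟩
      simp only [Fin.coe_castLE]
      exact a.2
  rw [this, Finset.card_map, Finset.card_univ, Fintype.card_fin]

/-- if split boundary conditions (last `n - k` rows of `C` zero,
first `k` rows of `D` zero, `k ≤ n`) are regular, i.e. `det T_{zB}(C,D) ≠ 0` for
every admissible `z`, then `n = 2k` and `κ₊(Re(zB)) = κ₋(Re(zB)) = k` for every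
admissible `z`. -/
theorem stmt11 {n : ℕ} (k : ℕ) (hk : k ≤ n) (b : Fin n → ℂ) (hb : ∀ j, b j ≠ 0)
    (C D : Matrix (Fin n) (Fin n) ℂ)
    (hC : ∀ i : Fin n, k ≤ (i : ℕ) → C i = 0)
    (hD : ∀ i : Fin n, (i : ℕ) < k → D i = 0)
    (hreg : ∀ z : ℂ, (∀ j, (z * b j).re ≠ 0) →
      (Matrix.of fun i j => if 0 < (z * b j).re then C i j else D i j).det ≠ 0) :
    n = 2 * k ∧ ∀ z : ℂ, (∀ j, (z * b j).re ≠ 0) →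
      (Finset.univ.filter fun j : Fin n => 0 < (z * b j).re).card = k ∧
      (Finset.univ.filter fun j : Fin n => (z * b j).re < 0).card = k := by
  have hRlt := card_filter_lt hk
  have hRge : (Finset.univ.filter fun i : Fin n => ¬ ((i : ℕ) < k)).card = n - k := by
    have := Finset.card_filter_add_card_filter_not
      (s := (Finset.univ : Finset (Fin n))) (p := fun i : Fin n => (i : ℕ) < k)
    simp only [Finset.card_univ, Fintype.card_fin] at this
    omega
  have key : ∀ z : ℂ, (∀ j, (z * b j).re ≠ 0) →
      (Finset.univ.filter fun j : Fin n => 0 < (z * b j).re).card = k ∧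
      (Finset.univ.filter fun j : Fin n => (z * b j).re < 0).card = n - k := by
    intro z hz
    have hdet := hreg z hz
    set T := Matrix.of fun i j => if 0 < (z * b j).re then C i j else D i j with hTdef
    set Sp := Finset.univ.filter fun j : Fin n => 0 < (z * b j).re with hSp
    set Sm := Finset.univ.filter fun j : Fin n => (z * b j).re < 0 with hSm
    have hpart : Sp.card + Sm.card = n := by
      have h1 := Finset.card_filter_add_card_filter_not
        (s := (Finset.univ : Finset (Fin n))) (p := fun j : Fin n => 0 < (z * b j).re)
      have h2 : (Finset.univ.filter fun j : Fin n => ¬ (0 < (z * b j).re)) = Sm := by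
        ext j
        simp only [Finset.mem_filter, Finset.mem_univ, true_and, hSm]
        constructor
        · intro h; rcases lt_or_eq_of_le (not_lt.mp h) with h' | h'
          · exact h'
          · exact absurd h' (hz j)
        · intro h; exact not_lt.mpr h.le
      rw [h2] at h1
      rw [Finset.card_univ, Fintype.card_fin] at h1
      exact h1
    have h1 : Sp.card ≤ k := by
      by_contra h
      apply hdet
      apply aux_det_zero T Sp (Finset.univ.filter fun i : Fin n => (i : ℕ) < k)
      · omega
      · intro i j hj hi
        simp only [hSp, Finset.mem_filter, Finset.mem_univ, true_and] at hj
        simp only [Finset.mem_filter, Finset.mem_univ, true_and, not_lt] at hi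
        show (if 0 < (z * b j).re then C i j else D i j) = 0
        rw [if_pos hj]
        exact congrFun (hC i hi) j
    have h2 : Sm.card ≤ n - k := by
      by_contra h
      apply hdet
      apply aux_det_zero T Sm (Finset.univ.filter fun i : Fin n => ¬ ((i : ℕ) < k))
      · omega
      · intro i j hj hi
        simp only [hSm, Finset.mem_filter, Finset.mem_univ, true_and] at hj
        simp only [Finset.mem_filter, Finset.mem_univ, true_and, not_not] at hi
        show (if 0 < (z * b j).re then C i j else D i j) = 0
        rw [if_neg (not_lt.mpr hj.le)]
        exact congrFun (hD i hi) j
    omega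
  -- construct an admissible z
  obtain ⟨t, ht⟩ := Infinite.exists_notMem_finset
    (Finset.image (fun j => (b j).re / (b j).im) Finset.univ)
  set z0 : ℂ := 1 + t * Complex.I with hz0def
  have hz0 : ∀ j, (z0 * b j).re ≠ 0 := by
    intro j
    have hre : (z0 * b j).re = (b j).re - t * (b j).im := by
      simp [hz0def, Complex.mul_re, Complex.add_re, Complex.add_im, Complex.mul_im]
    rw [hre]
    intro h
    by_cases him : (b j).im = 0
    · have hre0 : (b j).re = 0 := by rw [him] at h; simpa using h
      exact hb j (Complex.ext hre0 him)
    · apply ht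
      refine Finset.mem_image.mpr ⟨j, Finset.mem_univ j, ?_⟩
      rw [div_eq_iff him]
      linarith
  have hz0' : ∀ j, ((-z0) * b j).re ≠ 0 := by
    intro j
    have : ((-z0) * b j).re = -((z0 * b j).re) := by
      rw [neg_mul, Complex.neg_re]
    rw [this]
    exact neg_ne_zero.mpr (hz0 j)
  have h2k : n = 2 * k := by
    have hA := key z0 hz0
    have hB := key (-z0) hz0'
    have hset : (Finset.univ.filter fun j : Fin n => 0 < ((-z0) * b j).re)
        = (Finset.univ.filter fun j : Fin n => (z0 * b j).re < 0) := by
      ext j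
      simp [neg_mul, Complex.neg_re, neg_pos]
    rw [hset] at hB
    omega
  refine ⟨h2k, fun z hz => ?_⟩
  obtain ⟨h1, h2⟩ := key z hz
  exact ⟨h1, by omega⟩
end

section
/- Let n = 3, b_j = exp(2πij/3), and consider boundary conditions with C = I_3 and D having zero diagonal with all off-diagonal entries d_{jk} nonzero. Then for z = 1 the matrix T_{zB}(C,D) has determinant -d_{12} d_{21} ≠ 0, while for z = -1 the matrix T_{zB}(C,D) is singular (its determinant is 0). In particular, these boundary conditions are not regular. -/
lemma aux_cos_2pi3 : Real.cos (2 * Real.pi / 3) = -(1/2) := by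
  have : (2 * Real.pi / 3) = Real.pi - Real.pi / 3 := by ring
  rw [this, Real.cos_pi_sub, Real.cos_pi_div_three]

lemma aux_cos_4pi3 : Real.cos (2 * Real.pi * 2 / 3) = -(1/2) := by
  have : (2 * Real.pi * 2 / 3) = Real.pi / 3 + Real.pi := by ring
  rw [this, Real.cos_add_pi, Real.cos_pi_div_three]

/-- for `n = 3`, `b j = exp(2πij/3)`, `C = I₃` and
`D = -(d j k)` with zero diagonal and nonzero off-diagonal entries, the matrix
`T_{zB}(C,D)` (with `B = diag(b j⁻¹)`) for `z = 1` has determinant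
`-(d₁₂ d₂₁) ≠ 0`, while for `z = -1` it is singular; in particular these boundary
conditions are not regular. -/
theorem stmt12 (d : Fin 3 → Fin 3 → ℂ) (hdiag : ∀ j, d j j = 0)
    (hoff : ∀ j k, j ≠ k → d j k ≠ 0)
    (b : Fin 3 → ℂ)
    (hb : ∀ j : Fin 3, b j = Complex.exp (2 * Real.pi * Complex.I * ((j : ℕ) + 1) / 3))
    (C D : Matrix (Fin 3) (Fin 3) ℂ) (hC : C = 1)
    (hD : D = Matrix.of fun j k => -(d j k)) :
    (Matrix.of fun i k => if 0 < ((1 : ℂ) * (b k)⁻¹).re then C i k else D i k).det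
        = -(d 0 1 * d 1 0) ∧
    (Matrix.of fun i k => if 0 < ((1 : ℂ) * (b k)⁻¹).re then C i k else D i k).det ≠ 0 ∧
    (Matrix.of fun i k => if 0 < ((-1 : ℂ) * (b k)⁻¹).re then C i k else D i k).det = 0 ∧
    ¬ (∀ z : ℂ, (∀ j, (z * (b j)⁻¹).re ≠ 0) →
        (Matrix.of fun i k => if 0 < (z * (b k)⁻¹).re then C i k else D i k).det ≠ 0) := by
  have h0 : ((b 0)⁻¹).re = -(1/2) := by
    rw [hb 0, ← Complex.exp_neg]
    have : -(2 * Real.pi * Complex.I * (((0 : Fin 3) : ℕ) + 1) / 3)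
        = ((-(2 * Real.pi / 3) : ℝ) : ℂ) * Complex.I := by
      simp only [Fin.val_zero]; push_cast; ring
    rw [this, Complex.exp_ofReal_mul_I_re, Real.cos_neg, aux_cos_2pi3]
  have h1 : ((b 1)⁻¹).re = -(1/2) := by
    rw [hb 1, ← Complex.exp_neg]
    have : -(2 * Real.pi * Complex.I * (((1 : Fin 3) : ℕ) + 1) / 3)
        = ((-(2 * Real.pi * 2 / 3) : ℝ) : ℂ) * Complex.I := by
      simp only [Fin.val_one]; push_cast; ring
    rw [this, Complex.exp_ofReal_mul_I_re, Real.cos_neg, aux_cos_4pi3]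
  have h2 : ((b 2)⁻¹).re = 1 := by
    rw [hb 2]
    have : (2 * Real.pi * Complex.I * (((2 : Fin 3) : ℕ) + 1) / 3)
        = 2 * (Real.pi : ℂ) * Complex.I := by
      have : ((2 : Fin 3) : ℕ) = 2 := rfl
      rw [this]; push_cast; ring
    rw [this, Complex.exp_two_pi_mul_I]
    norm_num
  have det1 : (Matrix.of fun i k =>
      if 0 < ((1 : ℂ) * (b k)⁻¹).re then C i k else D i k).det = -(d 0 1 * d 1 0) := by
    rw [Matrix.det_fin_three]
    simp only [Matrix.of_apply, one_mul, h0, h1, h2]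
    norm_num [hC, hD, Matrix.one_apply, hdiag, Fin.ext_iff]
  have detm1 : (Matrix.of fun i k =>
      if 0 < ((-1 : ℂ) * (b k)⁻¹).re then C i k else D i k).det = 0 := by
    rw [Matrix.det_fin_three]
    simp only [Matrix.of_apply, neg_one_mul, Complex.neg_re, h0, h1, h2]
    norm_num [hC, hD, Matrix.one_apply, hdiag, Fin.ext_iff]
  refine ⟨det1, ?_, detm1, ?_⟩
  · rw [det1]
    simpa using mul_ne_zero (hoff 0 1 (by decide)) (hoff 1 0 (by decide))
  · intro h
    refine h (-1) (fun j => ?_) detm1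
    rw [neg_one_mul, Complex.neg_re]
    fin_cases j
    · show -((b 0)⁻¹).re ≠ 0; rw [h0]; norm_num
    · show -((b 1)⁻¹).re ≠ 0; rw [h1]; norm_num
    · show -((b 2)⁻¹).re ≠ 0; rw [h2]; norm_num
end

section
/- Let C ∈ ℂ^{n×n} be nonsingular and D = CM where M ∈ ℂ^{n×n} is a matrix all of whose principal minors (determinants of submatrices M(S,S) for all subsets S of indices) are nonzero. Then for every diagonal matrix A = diag(a_1,...,a_n) with Re(a_k) ≠ 0 for all k, the matrix T_A(C,D) is nonsingular. In particular, T_A(I_n, M) is nonsingular, and det T_A(C,D) = det C · det T_A(I_n, M). -/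
/-- if `C` is nonsingular and `D = C M` where all principal minors of
`M` are nonzero, then for any `A = diag(a k)` with `Re (a k) ≠ 0`, the matrix
`T_A(C,D)` is nonsingular; moreover `T_A(I, M)` is nonsingular and
`det T_A(C,D) = det C · det T_A(I,M)`. -/
theorem stmt13 {n : ℕ} (C M : Matrix (Fin n) (Fin n) ℂ) (hC : C.det ≠ 0)
    (hM : ∀ s : Finset (Fin n),
      (M.submatrix (Subtype.val : {x // x ∈ s} → Fin n)
        (Subtype.val : {x // x ∈ s} → Fin n)).det ≠ 0)
    (D : Matrix (Fin n) (Fin n) ℂ) (hD : D = C * M)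
    (a : Fin n → ℂ) (ha : ∀ k, (a k).re ≠ 0) :
    (Matrix.of fun i k => if 0 < (a k).re then C i k else D i k).det ≠ 0 ∧
    (Matrix.of fun i k =>
        if 0 < (a k).re then (1 : Matrix (Fin n) (Fin n) ℂ) i k else M i k).det ≠ 0 ∧
    (Matrix.of fun i k => if 0 < (a k).re then C i k else D i k).det
      = C.det * (Matrix.of fun i k =>
          if 0 < (a k).re then (1 : Matrix (Fin n) (Fin n) ℂ) i k else M i k).det := by
  subst hD
  set T' : Matrix (Fin n) (Fin n) ℂ :=
    Matrix.of fun i k => if 0 < (a k).re then (1 : Matrix (Fin n) (Fin n) ℂ) i k else M i k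
    with hT'
  have hmul : (Matrix.of fun i k => if 0 < (a k).re then C i k else (C * M) i k)
      = C * T' := by
    ext i k
    by_cases h : 0 < (a k).re
    · simp [hT', Matrix.mul_apply, h, Matrix.one_apply, mul_ite, Finset.sum_ite_eq]
    · simp [hT', Matrix.mul_apply, h]
  set S : Finset (Fin n) := Finset.univ.filter (fun k => ¬ 0 < (a k).re) with hS
  have hT'det : T'.det ≠ 0 := by
    intro hdet
    rw [← Matrix.exists_mulVec_eq_zero_iff] at hdet
    obtain ⟨v, hv, hv0⟩ := hdet
    have key : ∀ i : Fin n, ∑ k, (if 0 < (a k).re then (1 : Matrix (Fin n) (Fin n) ℂ) i k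
        else M i k) * v k = 0 := by
      intro i
      have h2 := congrFun hv0 i
      simp only [Matrix.mulVec, dotProduct, hT', Matrix.of_apply, Pi.zero_apply] at h2
      exact h2
    have keyS : ∀ i : Fin n, ¬ 0 < (a i).re → ∑ k ∈ S, M i k * v k = 0 := by
      intro i hi
      have h3 : ∀ k, (if 0 < (a k).re then (1 : Matrix (Fin n) (Fin n) ℂ) i k
          else M i k) * v k = if ¬ 0 < (a k).re then M i k * v k else 0 := by
        intro k
        by_cases h : 0 < (a k).re
        · have : i ≠ k := fun h' => hi (h' ▸ h)
          simp [h, Matrix.one_apply, this]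
        · simp [h]
      have := key i
      rw [Finset.sum_congr rfl (fun k _ => h3 k), Finset.sum_ite, Finset.sum_const_zero,
        add_zero] at this
      simpa [hS] using this
    have hvS : ∀ k ∈ S, v k = 0 := by
      by_contra hne
      push_neg at hne
      obtain ⟨k0, hk0S, hk0⟩ := hne
      refine hM S (Matrix.exists_mulVec_eq_zero_iff.mp
        ⟨fun j => v j.val, fun h0 => hk0 (congrFun h0 ⟨k0, hk0S⟩), ?_⟩)
      funext j
      have hj : ¬ 0 < (a j.val).re := by
        have := j.property
        simpa [hS] using this
      have := keyS j.val hj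
      simp only [Matrix.mulVec, dotProduct, Matrix.submatrix_apply, Pi.zero_apply]
      rw [Finset.sum_coe_sort S (fun k => M j.val k * v k)]
      exact this
    have hvall : v = 0 := by
      funext i
      show v i = 0
      by_cases hi : 0 < (a i).re
      · have := key i
        have h3 : ∀ k, (if 0 < (a k).re then (1 : Matrix (Fin n) (Fin n) ℂ) i k
            else M i k) * v k = if 0 < (a k).re then (1 : Matrix (Fin n) (Fin n) ℂ) i k * v k
              else 0 := by
          intro k
          by_cases h : 0 < (a k).re
          · simp [h]
          · have : v k = 0 := hvS k (by simpa [hS, not_lt] using h)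
            simp [h, this]
        rw [Finset.sum_congr rfl (fun k _ => h3 k)] at this
        have h4 : ∀ x, ((if 0 < (a x).re then (1 : Matrix (Fin n) (Fin n) ℂ) i x * v x else 0))
            = if i = x then v x else 0 := by
          intro x
          by_cases hx : i = x
          · subst hx; simp [hi, Matrix.one_apply]
          · simp [hx, Matrix.one_apply]
        rw [Finset.sum_congr rfl (fun x _ => h4 x), Finset.sum_ite_eq] at this
        simpa using this
      · exact hvS i (by simpa [hS, not_lt] using hi)
    exact hv hvall
  refine ⟨?_, hT'det, ?_⟩
  · rw [hmul, Matrix.det_mul]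
    exact mul_ne_zero hC hT'det
  · rw [hmul, Matrix.det_mul]
end

section
/- Let B = diag(c_1, ..., c_n) be a nonsingular selfadjoint (real) diagonal matrix, and define one boundary condition of the form Σ_k c'_k y_k(ξ_k) = 0 where ξ_k = 0 if c_k > 0 and ξ_k = 1 if c_k < 0, with coefficients c'_k not all zero. Then there exists a nonzero Φ ∈ L²([0,1]; ℂⁿ) orthogonal to every solution Y(·;λ) = (y_1(·;λ), ..., y_n(·;λ)) of -iBY' = λY satisfying this boundary condition, for every λ ∈ ℂ. Specifically, with y_k(x;λ) = a_k e^{i|c_k|λx} for c_k > 0 and y_k(x;λ) = a_k e^{i|c_k|λ(1-x)} for c_k < 0 subject to Σ c'_k a_k = 0, the vector Φ with components φ_k(x) = conj(c'_k)|c_k| on an interval of length α/|c_k| adjacent to the endpoint ξ_k (and zero elsewhere), for any α > 0 with α/|c_k| < 1, satisfies (Y(·;λ), Φ) = (Σ_k c'_k a_k) ∫_0^α e^{iλt} dt = 0. -/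
open MeasureTheory

lemma key_int (m : ℝ) (hm : 0 < m) (lam : ℂ) (α : ℝ) :
    ∫ x in (0:ℝ)..(α/m), Complex.exp (Complex.I * (m:ℝ) * lam * (x:ℂ)) * (m:ℂ)
      = ∫ t in (0:ℝ)..α, Complex.exp (Complex.I * lam * (t:ℂ)) := by
  rw [intervalIntegral.integral_mul_const]
  by_cases hl : lam = 0
  · simp only [hl, mul_zero, zero_mul, Complex.exp_zero]
    rw [intervalIntegral.integral_const, intervalIntegral.integral_const]
    simp only [sub_zero, Complex.real_smul, mul_one]
    push_cast
    have hm' : (m:ℂ) ≠ 0 := Complex.ofReal_ne_zero.mpr hm.ne'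
    field_simp
  · have h1 : (Complex.I * (m:ℂ) * lam) ≠ 0 := by
      simp [Complex.I_ne_zero, hl, Complex.ofReal_ne_zero.mpr hm.ne']
    have h2 : (Complex.I * lam) ≠ 0 := by simp [Complex.I_ne_zero, hl]
    have e1 : ∫ x in (0:ℝ)..(α/m), Complex.exp (Complex.I * (m:ℝ) * lam * (x:ℂ))
        = (Complex.exp (Complex.I * m * lam * ((α/m : ℝ):ℂ))
            - Complex.exp (Complex.I * m * lam * ((0:ℝ):ℂ))) / (Complex.I * m * lam) :=
      integral_exp_mul_complex h1
    have e2 : ∫ t in (0:ℝ)..α, Complex.exp (Complex.I * lam * (t:ℂ))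
        = (Complex.exp (Complex.I * lam * ((α:ℝ):ℂ))
            - Complex.exp (Complex.I * lam * ((0:ℝ):ℂ))) / (Complex.I * lam) :=
      integral_exp_mul_complex h2
    rw [e1, e2]
    have hm' : (m:ℂ) ≠ 0 := Complex.ofReal_ne_zero.mpr hm.ne'
    have hα : ((m:ℂ)) * ((α/m : ℝ):ℂ) = (α:ℂ) := by
      push_cast; field_simp
    have : Complex.I * (m:ℂ) * lam * ((α/m : ℝ):ℂ) = Complex.I * lam * (α:ℂ) := by
      rw [show Complex.I * (m:ℂ) * lam * ((α/m : ℝ):ℂ)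
            = Complex.I * lam * ((m:ℂ) * ((α/m : ℝ):ℂ)) by ring, hα]
    rw [this]
    field_simp
    simp

/-- for `B = diag(c 1, ..., c n)` real nonsingular and a boundary
condition `∑ k, c' k * y k (ξ k) = 0` (`ξ k = 0` for `c k > 0`, `ξ k = 1` for
`c k < 0`, coefficients not all zero), there is a nonzero `Φ ∈ L²([0,1]; ℂⁿ)`
orthogonal to every solution `y k (x) = a k e^{i|c k|λx}` (resp.
`a k e^{i|c k|λ(1-x)}`), `∑ c' k a k = 0`, of `-iBY' = λY` satisfying this
condition, for every `λ ∈ ℂ`. -/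
theorem stmt14 {n : ℕ} (c : Fin n → ℝ) (hc : ∀ k, c k ≠ 0)
    (c' : Fin n → ℂ) (hc' : ∃ k, c' k ≠ 0)
    (α : ℝ) (hα : 0 < α) (hα1 : ∀ k, α / |c k| < 1) :
    ∃ Φ : Fin n → ℝ → ℂ,
      (∀ k, IntegrableOn (Φ k) (Set.Icc (0 : ℝ) 1) volume) ∧
      (∃ k, ¬ (∀ᵐ x ∂(volume.restrict (Set.Icc (0 : ℝ) 1)), Φ k x = 0)) ∧
      ∀ (lam : ℂ) (a : Fin n → ℂ), (∑ k, c' k * a k) = 0 →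
        (∑ k, ∫ x in (0 : ℝ)..1,
          (if 0 < c k then a k * Complex.exp (Complex.I * (|c k| : ℝ) * lam * (x : ℂ))
           else a k * Complex.exp (Complex.I * (|c k| : ℝ) * lam * (1 - (x : ℂ))))
            * (starRingEnd ℂ) (Φ k x)) = 0 := by
  set β : Fin n → ℝ := fun k => α / |c k| with hβdef
  have hm : ∀ k, (0:ℝ) < |c k| := fun k => abs_pos.mpr (hc k)
  have hβpos : ∀ k, 0 < β k := fun k => div_pos hα (hm k)
  have hβlt : ∀ k, β k < 1 := hα1
  set S : Fin n → Set ℝ := fun k =>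
    if 0 < c k then Set.Ioc (0:ℝ) (β k) else Set.Ioc (1 - β k) 1 with hSdef
  have hSmeas : ∀ k, MeasurableSet (S k) := by
    intro k; simp only [hSdef]; split_ifs <;> exact measurableSet_Ioc
  have hSsub : ∀ k, S k ⊆ Set.Icc (0:ℝ) 1 := by
    intro k; simp only [hSdef]; split_ifs
    · exact fun x hx => ⟨hx.1.le, hx.2.trans (hβlt k).le⟩
    · exact fun x hx => ⟨le_trans (by linarith [hβpos k, hβlt k]) hx.1.le, hx.2⟩
  refine ⟨fun k => Set.indicator (S k) (fun _ => (starRingEnd ℂ) (c' k) * (|c k| : ℝ)),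
    ?_, ?_, ?_⟩
  · intro k
    exact (integrableOn_const measure_Icc_lt_top.ne).indicator (hSmeas k)
  · obtain ⟨k, hk⟩ := hc'
    refine ⟨k, fun h => ?_⟩
    have hval : ((starRingEnd ℂ) (c' k) * (|c k| : ℝ) : ℂ) ≠ 0 := by
      apply mul_ne_zero
      · simpa using hk
      · exact_mod_cast Complex.ofReal_ne_zero.mpr (hm k).ne'
    have hsub : S k ⊆ {x | ¬ (Set.indicator (S k)
        (fun _ => (starRingEnd ℂ) (c' k) * (|c k| : ℝ)) x = 0)} := by
      intro x hx
      simp only [Set.mem_setOf_eq, Set.indicator_of_mem hx]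
      exact hval
    have h0 : (volume.restrict (Set.Icc (0:ℝ) 1)) {x | ¬ (Set.indicator (S k)
        (fun _ => (starRingEnd ℂ) (c' k) * (|c k| : ℝ)) x = 0)} = 0 := by
      rw [← MeasureTheory.ae_iff] at *; exact h
    have hle : (volume.restrict (Set.Icc (0:ℝ) 1)) (S k) = 0 :=
      le_antisymm (h0 ▸ measure_mono hsub) (zero_le)
    rw [Measure.restrict_apply (hSmeas k),
      Set.inter_eq_self_of_subset_left (hSsub k)] at hle
    have : volume (S k) ≠ 0 := by
      simp only [hSdef]; split_ifs with h'
      · rw [Real.volume_Ioc]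
        simp [ENNReal.ofReal_eq_zero, not_le, hβpos k]
      · rw [Real.volume_Ioc]
        have : (0:ℝ) < 1 - (1 - β k) := by linarith [hβpos k]
        simp only [show (1:ℝ) - (1 - β k) = β k by ring]
        simp [ENNReal.ofReal_eq_zero, not_le, hβpos k]
    exact this hle
  · intro lam a hsum
    have key : ∀ k, (∫ x in (0 : ℝ)..1,
        (if 0 < c k then a k * Complex.exp (Complex.I * (|c k| : ℝ) * lam * (x : ℂ))
         else a k * Complex.exp (Complex.I * (|c k| : ℝ) * lam * (1 - (x : ℂ))))
          * (starRingEnd ℂ) (Set.indicator (S k)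
              (fun _ => (starRingEnd ℂ) (c' k) * (|c k| : ℝ)) x))
        = (c' k * a k) * ∫ t in (0:ℝ)..α, Complex.exp (Complex.I * lam * (t:ℂ)) := by
      intro k
      by_cases hck : 0 < c k
      · have hS : S k = Set.Ioc (0:ℝ) (β k) := by simp [hSdef, hck]
        have hrw : ∀ x : ℝ,
            (if 0 < c k then a k * Complex.exp (Complex.I * (|c k| : ℝ) * lam * (x : ℂ))
             else a k * Complex.exp (Complex.I * (|c k| : ℝ) * lam * (1 - (x : ℂ))))
              * (starRingEnd ℂ) (Set.indicator (S k)
                  (fun _ => (starRingEnd ℂ) (c' k) * (|c k| : ℝ)) x)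
            = Set.indicator (Set.Ioc (0:ℝ) (β k))
                (fun x : ℝ => a k * Complex.exp (Complex.I * (|c k| : ℝ) * lam * (x : ℂ))
                  * (c' k * (|c k| : ℝ))) x := by
          intro x
          rw [hS]
          by_cases hx : x ∈ Set.Ioc (0:ℝ) (β k)
          · simp only [Set.indicator_of_mem hx, if_pos hck, map_mul, Complex.conj_conj,
              Complex.conj_ofReal]
          · simp [Set.indicator_of_notMem hx]
        simp only [hrw]
        rw [intervalIntegral.integral_of_le (by norm_num : (0:ℝ) ≤ 1),
          MeasureTheory.setIntegral_indicator measurableSet_Ioc,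
          Set.Ioc_inter_Ioc, max_self, min_eq_right (hβlt k).le,
          ← intervalIntegral.integral_of_le (hβpos k).le]
        have : ∀ x : ℝ, a k * Complex.exp (Complex.I * (|c k| : ℝ) * lam * (x : ℂ))
              * (c' k * (|c k| : ℝ))
            = Complex.exp (Complex.I * (|c k| : ℝ) * lam * (x : ℂ)) * ((|c k| : ℝ):ℂ)
              * (c' k * a k) := by intro x; ring
        simp only [this]
        rw [intervalIntegral.integral_mul_const, hβdef]
        rw [key_int (|c k|) (hm k) lam α]
        ring
      · have hS : S k = Set.Ioc (1 - β k) 1 := by simp [hSdef, hck]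
        have hrw : ∀ x : ℝ,
            (if 0 < c k then a k * Complex.exp (Complex.I * (|c k| : ℝ) * lam * (x : ℂ))
             else a k * Complex.exp (Complex.I * (|c k| : ℝ) * lam * (1 - (x : ℂ))))
              * (starRingEnd ℂ) (Set.indicator (S k)
                  (fun _ => (starRingEnd ℂ) (c' k) * (|c k| : ℝ)) x)
            = Set.indicator (Set.Ioc (1 - β k) 1)
                (fun x : ℝ => a k * Complex.exp (Complex.I * (|c k| : ℝ) * lam * (1 - (x : ℂ)))
                  * (c' k * (|c k| : ℝ))) x := by
          intro x
          rw [hS]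
          by_cases hx : x ∈ Set.Ioc (1 - β k) 1
          · simp only [Set.indicator_of_mem hx, if_neg hck, map_mul, Complex.conj_conj,
              Complex.conj_ofReal]
          · simp [Set.indicator_of_notMem hx]
        simp only [hrw]
        have h01 : (0:ℝ) ≤ 1 - β k := by linarith [hβlt k]
        rw [intervalIntegral.integral_of_le (by norm_num : (0:ℝ) ≤ 1),
          MeasureTheory.setIntegral_indicator measurableSet_Ioc,
          Set.Ioc_inter_Ioc, min_self, max_eq_right h01,
          ← intervalIntegral.integral_of_le (by linarith [hβpos k] : 1 - β k ≤ 1)]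
        have hfe : ∀ x : ℝ, a k * Complex.exp (Complex.I * (|c k| : ℝ) * lam * (1 - (x : ℂ)))
              * (c' k * (|c k| : ℝ))
            = (fun t : ℝ => Complex.exp (Complex.I * (|c k| : ℝ) * lam * (t : ℂ))
                * ((|c k| : ℝ):ℂ) * (c' k * a k)) (1 - x) := by
          intro x
          push_cast
          ring
        simp only [hfe]
        rw [intervalIntegral.integral_comp_sub_left
          (fun t : ℝ => Complex.exp (Complex.I * (|c k| : ℝ) * lam * (t : ℂ))
            * ((|c k| : ℝ):ℂ) * (c' k * a k)) 1]
        simp only [sub_sub_cancel, sub_self]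
        have : ∀ t : ℝ, Complex.exp (Complex.I * (|c k| : ℝ) * lam * (t : ℂ))
              * ((|c k| : ℝ):ℂ) * (c' k * a k)
            = Complex.exp (Complex.I * (|c k| : ℝ) * lam * (t : ℂ)) * ((|c k| : ℝ):ℂ)
              * (c' k * a k) := fun t => rfl
        rw [intervalIntegral.integral_mul_const, hβdef]
        rw [key_int (|c k|) (hm k) lam α]
        ring
    simp only [key]
    rw [← Finset.sum_mul, hsum, zero_mul]
end

section
/- Let F : ℂ → ℂ be an entire function of exponential type which is bounded on four rays {θ_1 t : t > 0}, {θ_2 t : t > 0}, {θ_1 t : t < 0}, {θ_2 t : t < 0}, where θ_1, θ_2 are nonzero complex numbers not lying on a common line through the origin, and such that each of the four sectors determined by these rays has opening less than π. If in addition F(θ_1 t) → 0 as t → +∞, then F ≡ 0. -/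
open Filter

open Complex Set Bornology in
private lemma ray_mem (θ : ℂ) (hθ : θ ≠ 0) (k : ℤ) (w : ℂ)
    (hw : w.im = θ.arg + k * Real.pi) : ∃ t : ℝ, Complex.exp w = θ * t := by
  refine ⟨(-1 : ℝ) ^ k * Real.exp w.re / ‖θ‖, ?_⟩
  have habs : ((‖θ‖ : ℝ) : ℂ) ≠ 0 := by
    simpa using (norm_ne_zero_iff.mpr hθ)
  have hθeq : ((‖θ‖ : ℝ) : ℂ) * Complex.exp (θ.arg * Complex.I) = θ :=
    Complex.norm_mul_exp_arg_mul_I θ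
  have hw' : w = (w.re : ℂ) + θ.arg * Complex.I + (k : ℂ) * (Real.pi * Complex.I) := by
    apply Complex.ext <;> simp [hw] <;> ring
  have h2 : Complex.exp ((k : ℂ) * (Real.pi * Complex.I)) = (-1 : ℂ) ^ k := by
    rw [Complex.exp_int_mul, Complex.exp_pi_mul_I]
  rw [hw', Complex.exp_add, Complex.exp_add, h2]
  rw [show ((w.re : ℂ) + θ.arg * Complex.I + (k : ℂ) * (Real.pi * Complex.I)).re = w.re by rw [← hw']]
  push_cast
  field_simp
  linear_combination hθeq

open Complex Set Bornology in
private lemma strip_bound (F : ℂ → ℂ) (hF : Differentiable ℂ F)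
    (c A : ℝ) (hFexp : ∀ z, ‖F z‖ ≤ c * Real.exp (A * ‖z‖))
    (M : ℝ) (θa θb : ℂ) (hθa : θa ≠ 0) (hθb : θb ≠ 0)
    (hMa : ∀ t : ℝ, ‖F (θa * t)‖ ≤ M) (hMb : ∀ t : ℝ, ‖F (θb * t)‖ ≤ M)
    (lo hi : ℝ) (hlo : ∃ k : ℤ, lo = θa.arg + k * Real.pi)
    (hhi : ∃ k : ℤ, hi = θb.arg + k * Real.pi)
    (hwidth : hi - lo < Real.pi)
    (w : ℂ) (h1 : lo ≤ w.im) (h2 : w.im ≤ hi) : ‖F (Complex.exp w)‖ ≤ M := by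
  rcases eq_or_lt_of_le (h1.trans h2) with heq | hlt
  · -- degenerate strip: w is on the boundary ray
    obtain ⟨k, hk⟩ := hlo
    obtain ⟨t, ht⟩ := ray_mem θa hθa k w (by rw [← le_antisymm h1 (heq ▸ h2), hk])
    rw [ht]; exact hMa t
  · have hA : A ≤ |A| := le_abs_self A
    have hc : c ≤ |c| := le_abs_self c
    apply PhragmenLindelof.horizontal_strip
      (f := fun z => F (Complex.exp z)) (a := lo) (b := hi)
    · exact ((hF.comp Complex.differentiable_exp).diffContOnCl)
    · refine ⟨1, ?_, |A|, ?_⟩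
      · rw [lt_div_iff₀ (by linarith)]; linarith
      · apply Asymptotics.IsBigO.of_bound |c|
        filter_upwards with z
        have hz : ‖Complex.exp z‖ ≤ Real.exp |z.re| := by
          rw [Complex.norm_exp]
          exact Real.exp_le_exp.2 (le_abs_self _)
        have h3 : ‖F (Complex.exp z)‖ ≤ c * Real.exp (A * ‖Complex.exp z‖) :=
          hFexp _
        have h4 : c * Real.exp (A * ‖Complex.exp z‖) ≤ |c| * Real.exp (|A| * Real.exp (1 * |z.re|)) := by
          have : A * ‖Complex.exp z‖ ≤ |A| * Real.exp (1 * |z.re|) := by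
            calc A * ‖Complex.exp z‖ ≤ |A| * ‖Complex.exp z‖ :=
                  mul_le_mul_of_nonneg_right hA (norm_nonneg _)
              _ ≤ |A| * Real.exp (1 * |z.re|) := by
                  rw [one_mul]
                  exact mul_le_mul_of_nonneg_left hz (abs_nonneg _)
          calc c * Real.exp (A * ‖Complex.exp z‖)
              ≤ |c| * Real.exp (A * ‖Complex.exp z‖) :=
                mul_le_mul_of_nonneg_right hc (Real.exp_pos _).le
            _ ≤ |c| * Real.exp (|A| * Real.exp (1 * |z.re|)) := by
                exact mul_le_mul_of_nonneg_left (Real.exp_le_exp.2 this) (abs_nonneg _)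
        calc ‖F (Complex.exp z)‖ ≤ |c| * Real.exp (|A| * Real.exp (1 * |z.re|)) :=
              h3.trans h4
          _ = |c| * ‖Real.exp (|A| * Real.exp (1 * |z.re|))‖ := by
              rw [Real.norm_eq_abs, abs_of_pos (Real.exp_pos _)]
    · intro z hz
      obtain ⟨k, hk⟩ := hlo
      obtain ⟨t, ht⟩ := ray_mem θa hθa k z (by rw [hz, hk])
      rw [ht]; exact hMa t
    · intro z hz
      obtain ⟨k, hk⟩ := hhi
      obtain ⟨t, ht⟩ := ray_mem θb hθb k z (by rw [hz, hk])
      rw [ht]; exact hMb t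
    · exact h1
    · exact h2

/-- an entire function `F` of exponential type, bounded on the four
rays through `θ₁, -θ₁, θ₂, -θ₂` (where `θ₁, θ₂` do not lie on a common line through
the origin, so the four sectors have opening `< π`), which tends to `0` along the
ray `θ₁ t`, `t → +∞`, vanishes identically. -/
theorem stmt16 (F : ℂ → ℂ) (hF : Differentiable ℂ F)
    (hexp : ∃ c A : ℝ, ∀ z : ℂ, ‖F z‖ ≤ c * Real.exp (A * ‖z‖))
    (θ₁ θ₂ : ℂ) (hθ₁ : θ₁ ≠ 0) (hθ₂ : θ₂ ≠ 0)
    (hind : ¬ ∃ r : ℝ, θ₂ = (r : ℂ) * θ₁)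
    (hbdd : ∃ M : ℝ, ∀ t : ℝ, ‖F (θ₁ * t)‖ ≤ M ∧ ‖F (θ₂ * t)‖ ≤ M)
    (hlim : Tendsto (fun t : ℝ => F (θ₁ * t)) atTop (nhds 0)) :
    ∀ z : ℂ, F z = 0 := by
  obtain ⟨c, A, hFe⟩ := hexp
  obtain ⟨M, hM⟩ := hbdd
  have hπ : (0 : ℝ) < Real.pi := Real.pi_pos
  -- bound on the image of exp, i.e. on ℂ \ {0}
  have key : ∀ w : ℂ, ‖F (Complex.exp w)‖ ≤ M := by
    intro w
    set y := w.im with hy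
    set m : ℤ := ⌊(y - θ₁.arg) / Real.pi⌋ with hm
    set n : ℤ := ⌊(y - θ₂.arg) / Real.pi⌋ with hn
    set a : ℝ := θ₁.arg + m * Real.pi with ha
    set b : ℝ := θ₂.arg + n * Real.pi with hb
    have ha1 : a ≤ y := by
      have h := Int.floor_le ((y - θ₁.arg) / Real.pi)
      rw [← hm] at h
      have := (le_div_iff₀ hπ).mp h
      linarith
    have ha2 : y < a + Real.pi := by
      have h := Int.lt_floor_add_one ((y - θ₁.arg) / Real.pi)
      rw [← hm] at h
      have := (div_lt_iff₀ hπ).mp h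
      push_cast at this
      nlinarith
    have hb1 : b ≤ y := by
      have h := Int.floor_le ((y - θ₂.arg) / Real.pi)
      rw [← hn] at h
      have := (le_div_iff₀ hπ).mp h
      linarith
    have hb2 : y < b + Real.pi := by
      have h := Int.lt_floor_add_one ((y - θ₂.arg) / Real.pi)
      rw [← hn] at h
      have := (div_lt_iff₀ hπ).mp h
      push_cast at this
      nlinarith
    have hne : a ≠ b := by
      intro h
      apply hind
      have harg : θ₂.arg = θ₁.arg + (↑(m - n) : ℝ) * Real.pi := by
        push_cast
        rw [ha, hb] at h
        linarith
      obtain ⟨t, ht⟩ := ray_mem θ₁ hθ₁ (m - n) ((θ₂.arg : ℂ) * Complex.I)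
        (by simp [harg])
      have hθ₂eq : ((‖θ₂‖ : ℝ) : ℂ) * Complex.exp (θ₂.arg * Complex.I) = θ₂ :=
        Complex.norm_mul_exp_arg_mul_I θ₂
      refine ⟨‖θ₂‖ * t, ?_⟩
      push_cast
      linear_combination ((‖θ₂‖ : ℝ) : ℂ) * ht - hθ₂eq
    rcases lt_trichotomy a b with hab | hab | hab
    · -- strip [b, a + π]
      refine strip_bound F hF c A hFe M θ₂ θ₁ hθ₂ hθ₁ (fun t => (hM t).2)
        (fun t => (hM t).1) b (a + Real.pi) ⟨n, hb⟩
        ⟨m + 1, by push_cast; rw [ha]; ring⟩ (by linarith) w hb1 (le_of_lt ha2)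
    · exact absurd hab hne
    · -- strip [a, b + π]
      refine strip_bound F hF c A hFe M θ₁ θ₂ hθ₁ hθ₂ (fun t => (hM t).1)
        (fun t => (hM t).2) a (b + Real.pi) ⟨m, ha⟩
        ⟨n + 1, by push_cast; rw [hb]; ring⟩ (by linarith) w ha1 (le_of_lt hb2)
  -- F is bounded on all of ℂ
  have hbound : ∀ z : ℂ, ‖F z‖ ≤ max M ‖F 0‖ := by
    intro z
    rcases eq_or_ne z 0 with rfl | hz
    · exact le_max_right _ _
    · have : z ∈ Set.range Complex.exp := by rw [Complex.range_exp]; exact hz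
      obtain ⟨w, rfl⟩ := this
      exact le_trans (key w) (le_max_left _ _)
  have hrange : Bornology.IsBounded (Set.range F) := by
    rw [isBounded_iff_forall_norm_le]
    exact ⟨max M ‖F 0‖, by rintro x ⟨z, rfl⟩; exact hbound z⟩
  intro z
  have hconst : ∀ t : ℝ, F (θ₁ * t) = F z := fun t =>
    hF.apply_eq_apply_of_bounded hrange _ _
  have : Tendsto (fun t : ℝ => F (θ₁ * t)) atTop (nhds (F z)) := by
    simp only [hconst]
    exact tendsto_const_nhds
  exact tendsto_nhds_unique this hlim
end
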